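/- For each positive integer n and any (real or rational) variable x, the sum over all binary trees T with n vertices of the product over all vertices v of T of (x + 1/h_v) equals (1/(n+1)!) * prod_{k=0}^{n-1} ((n+1+k)*x + n+1-k), where h_v is the hook length of v. -/

import Mathlib

/-- A binary tree: `nil` is the empty tree, `node l r` is a vertex with
(possibly empty) left subtree `l` and right subtree `r`. -/
inductive BinTree where
  | nil : BinTree
  | node : BinTree → BinTree → BinTree

/-- Number of vertices of a binary tree. -/
def BinTree.size : BinTree → ℕ
  | .nil => 0
  | .node l r => l.size + r.size + 1

/-- The multiset of hook lengths of the vertices of a binary tree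
(the hook length of a vertex is the number of vertices of the subtree
rooted at it, including itself). -/
def BinTree.hooks : BinTree → Multiset ℕ
  | .nil => 0
  | .node l r => (BinTree.node l r).size ::ₘ (l.hooks + r.hooks)

open Finset Polynomial

noncomputable def PA (z w : ℝ) : ℕ → Polynomial ℝ
  | 0 => 1
  | (k+1) => Polynomial.C ((1:ℝ)/((k+1).factorial : ℝ)) *
      (Polynomial.X * ∏ j ∈ Finset.range k,
        (Polynomial.X + Polynomial.C (((k:ℝ)+1)*z - ((j:ℝ)+1)*w)))

noncomputable def Aev (z w : ℝ) (k : ℕ) (x : ℝ) : ℝ := (PA z w k).eval x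

lemma Aev_zero (z w x : ℝ) : Aev z w 0 x = 1 := by simp [Aev, PA]

lemma Aev_succ (z w : ℝ) (k : ℕ) (x : ℝ) :
    Aev z w (k+1) x = (1/(((k+1).factorial : ℝ))) *
      (x * ∏ j ∈ Finset.range k, (x + (((k:ℝ)+1)*z - ((j:ℝ)+1)*w))) := by
  simp [Aev, PA, Polynomial.eval_prod]

lemma Aev_at_zero (z w : ℝ) (k : ℕ) : Aev z w (k+1) 0 = 0 := by
  simp [Aev_succ]

lemma pascal (z w : ℝ) (k : ℕ) (x : ℝ) :
    Aev z w (k+1) x = Aev z w (k+1) (x-w) + w * Aev z w k (x+z-w) := by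
  cases k with
  | zero => simp [Aev_succ, Aev_zero]
  | succ m =>
    have hfac : (((m+2).factorial : ℝ)) = ((m:ℝ)+2) * ((m+1).factorial : ℝ) := by
      rw [Nat.factorial_succ]; push_cast; ring
    have hfpos : (((m+1).factorial : ℝ)) ≠ 0 := by positivity
    set c : ℕ → ℝ := fun j => x + (((m:ℝ)+2)*z - (j:ℝ)*w) with hc
    have h1 : ∏ j ∈ Finset.range (m+1), (x + ((((m+1:ℕ):ℝ)+1)*z - ((j:ℝ)+1)*w))
        = c 1 * ∏ j ∈ Finset.range m, c (j+1+1) := by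
      have e0 : ∀ j : ℕ, (x + ((((m+1:ℕ):ℝ)+1)*z - (((j:ℕ):ℝ)+1)*w)) = c (j+1) := by
        intro j; simp only [hc]; push_cast; ring
      simp only [e0]
      rw [Finset.prod_range_succ', mul_comm]
    have h2 : ∏ j ∈ Finset.range (m+1), ((x-w) + ((((m+1:ℕ):ℝ)+1)*z - ((j:ℝ)+1)*w))
        = (∏ j ∈ Finset.range m, c (j+1+1)) * c (m+1+1) := by
      have e0 : ∀ j : ℕ, ((x-w) + ((((m+1:ℕ):ℝ)+1)*z - (((j:ℕ):ℝ)+1)*w)) = c (j+1+1) := by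
        intro j; simp only [hc]; push_cast; ring
      simp only [e0]
      rw [Finset.prod_range_succ]
    have h3 : ∏ j ∈ Finset.range m, ((x+z-w) + (((m:ℝ)+1)*z - ((j:ℝ)+1)*w))
        = ∏ j ∈ Finset.range m, c (j+1+1) := by
      apply Finset.prod_congr rfl
      intro j _
      simp only [hc]; push_cast; ring
    rw [Aev_succ, Aev_succ, Aev_succ, h1, h2, h3, hfac]
    have key : x * c 1 = (x-w) * c (m+1+1) + ((m:ℝ)+2) * w * (x+z-w) := by
      simp only [hc]; push_cast; ring
    field_simp
    linear_combination (∏ j ∈ Finset.range m, c (j+1+1)) * key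

lemma const_of_periodic (Q : Polynomial ℝ) (w : ℝ) (hw : w ≠ 0)
    (h : ∀ t, Q.eval t = Q.eval (t - w)) (t : ℝ) : Q.eval t = Q.eval 0 := by
  have horb : ∀ n : ℕ, Q.eval (t - n * w) = Q.eval t := by
    intro n
    induction n with
    | zero => norm_num
    | succ m ih =>
      have : t - ((m:ℝ)+1) * w = (t - m * w) - w := by ring
      push_cast
      rw [this, ← h (t - m * w), ih]
  have hR : (Q - Polynomial.C (Q.eval t)) = 0 := by
    apply Polynomial.eq_zero_of_infinite_isRoot
    refine Set.infinite_of_injective_forall_mem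
      (f := fun n : ℕ => t - n * w) ?_ ?_
    · intro a b hab
      simp only at hab
      have h2 : (a:ℝ)*w = (b:ℝ)*w := by linarith
      have h3 : (a:ℝ) = b := mul_right_cancel₀ hw h2
      exact_mod_cast h3
    · intro n
      simp only [Set.mem_setOf_eq, Polynomial.IsRoot, Polynomial.eval_sub,
        Polynomial.eval_C, horb n, sub_self]
  have : Q = Polynomial.C (Q.eval t) := by linear_combination hR
  rw [this]; simp

lemma rothe (z w : ℝ) (hw : w ≠ 0) :
    ∀ m, ∀ x y : ℝ, ∑ k ∈ Finset.range (m+1), Aev z w k x * Aev z w (m-k) y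
      = Aev z w m (x+y) := by
  intro m
  induction m with
  | zero => intro x y; simp [Aev_zero]
  | succ m ih =>
    intro x y
    set Q : Polynomial ℝ :=
      (∑ k ∈ Finset.range (m+2), PA z w k * Polynomial.C (Aev z w (m+1-k) y))
        - (PA z w (m+1)).comp (Polynomial.X + Polynomial.C y) with hQ
    have hev : ∀ t, Q.eval t
        = (∑ k ∈ Finset.range (m+2), Aev z w k t * Aev z w (m+1-k) y)
          - Aev z w (m+1) (t+y) := by
      intro t
      simp [hQ, Polynomial.eval_finset_sum, Aev]
    have hstep : ∀ t, (∑ k ∈ Finset.range (m+2), Aev z w k t * Aev z w (m+1-k) y)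
        = (∑ k ∈ Finset.range (m+2), Aev z w k (t-w) * Aev z w (m+1-k) y)
          + w * Aev z w m (t+z-w+y) := by
      intro t
      rw [Finset.sum_range_succ' (fun k => Aev z w k t * Aev z w (m+1-k) y) (m+1),
          Finset.sum_range_succ' (fun k => Aev z w k (t-w) * Aev z w (m+1-k) y) (m+1)]
      have hsub : ∀ k : ℕ, m + 1 - (k+1) = m - k := fun k => Nat.succ_sub_succ m k
      simp only [hsub, Aev_zero]
      rw [← ih (t+z-w) y]
      have expand : ∀ k ∈ Finset.range (m+1),
          Aev z w (k+1) t * Aev z w (m-k) y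
            = Aev z w (k+1) (t-w) * Aev z w (m-k) y
              + w * (Aev z w k (t+z-w) * Aev z w (m-k) y) := by
        intro k _
        rw [pascal z w k t]; ring
      rw [Finset.sum_congr rfl expand, Finset.sum_add_distrib, ← Finset.mul_sum]
      ring
    have hper : ∀ t, Q.eval t = Q.eval (t - w) := by
      intro t
      rw [hev, hev, hstep t]
      have hp : Aev z w (m+1) (t+y) = Aev z w (m+1) (t+y-w) + w * Aev z w m (t+y+z-w) := by
        exact pascal z w m (t+y)
      rw [hp]
      have e1 : t + y - w = t - w + y := by ring
      have e2 : t + y + z - w = t + z - w + y := by ring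
      rw [e1, e2]; ring
    have hzero : Q.eval 0 = 0 := by
      rw [hev]
      rw [Finset.sum_range_succ' (fun k => Aev z w k 0 * Aev z w (m+1-k) y) (m+1)]
      simp [Aev_at_zero, Aev_zero]
    have := const_of_periodic Q w hw hper x
    rw [hev, hzero] at this
    linarith [this]

noncomputable def g (x : ℝ) (n : ℕ) : ℝ :=
  (1 / ((Nat.factorial (n+1)) : ℝ)) *
    ∏ k ∈ Finset.range n, (((n:ℝ)+1+(k:ℝ))*x + ((n:ℝ)+1-(k:ℝ)))

lemma g_zero (x : ℝ) : g x 0 = 1 := by simp [g]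

lemma g_cont (m : ℕ) : Continuous (fun x : ℝ => g x m) := by
  unfold g
  apply Continuous.mul continuous_const
  apply continuous_finset_prod
  intro k _
  continuity

lemma hgA (x : ℝ) (i : ℕ) :
    Aev (2*x) (x-1) (i+1) (-(x-1)) = -(x-1) * g x i := by
  rw [Aev_succ]
  have hprod : ∏ j ∈ Finset.range i, (-(x-1) + (((i:ℝ)+1)*(2*x) - ((j:ℝ)+1)*(x-1)))
      = ∏ k ∈ Finset.range i, (((i:ℝ)+1+(k:ℝ))*x + ((i:ℝ)+1-(k:ℝ))) := by
    rw [← Finset.prod_range_reflect (fun k => (((i:ℝ)+1+(k:ℝ))*x + ((i:ℝ)+1-(k:ℝ)))) i]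
    apply Finset.prod_congr rfl
    intro j hj
    have hj' : j < i := Finset.mem_range.mp hj
    have hc : ((i - 1 - j : ℕ) : ℝ) = (i:ℝ) - 1 - (j:ℝ) := by
      have he : i - 1 - j = i - (j+1) := by omega
      rw [he, Nat.cast_sub (by omega : j+1 ≤ i)]; push_cast; ring
    simp only [hc]
    ring
  rw [hprod, g]
  ring

lemma key_aux (n : ℕ) (x : ℝ) (hx : x ≠ 1) :
    ((n:ℝ)+1) * g x (n+1)
      = (((n:ℝ)+1)*x+1) * ∑ i ∈ Finset.range (n+1), g x i * g x (n-i) := by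
  have hv : x - 1 ≠ 0 := sub_ne_zero.mpr hx
  -- the Rothe convolution
  have hconv := rothe (2*x) (x-1) hv (n+2) (-(x-1)) (-(x-1))
  rw [Finset.sum_range_succ'] at hconv
  rw [Finset.sum_range_succ] at hconv
  have hidx : ∀ k ∈ Finset.range (n+1),
      Aev (2*x) (x-1) (k+1) (-(x-1)) * Aev (2*x) (x-1) (n+2-(k+1)) (-(x-1))
        = ((x-1)^2) * (g x k * g x (n-k)) := by
    intro k hk
    have hk' := Finset.mem_range.mp hk
    have he : n+2-(k+1) = (n-k)+1 := by omega
    rw [he, hgA x k, hgA x (n-k)]; ring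
  rw [Finset.sum_congr rfl hidx, ← Finset.mul_sum] at hconv
  have hz2 : n + 2 - (n + 2) = 0 := by omega
  rw [hz2] at hconv
  have hz0 : n + 2 - 0 = n + 2 := by omega
  rw [hz0] at hconv
  rw [Aev_zero] at hconv
  simp only [show n+1+1 = n+2 from rfl] at hconv
  have hmm : -(x-1) + -(x-1) = -(2*(x-1)) := by ring
  rw [hmm] at hconv
  -- hconv : (x-1)^2 * Σ + Aev (n+2) (-(x-1)) * 1 + 1 * Aev (n+2) (-(x-1)) = Aev (n+2) (-(2*(x-1)))
  -- product expansions
  have hp3 : ∏ j ∈ Finset.range (n+1),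
        (-(x-1) + ((((n+1:ℕ):ℝ)+1)*(2*x) - ((j:ℝ)+1)*(x-1)))
      = (∏ j ∈ Finset.range n, ((2*(n:ℝ)+2)*x+2 - ((j:ℝ)+1)*(x-1)))
          * ((2*(n:ℝ)+2)*x+2) := by
    rw [Finset.prod_range_succ']
    congr 1
    · apply Finset.prod_congr rfl
      intro j _
      push_cast; ring
    · push_cast; ring
  have hp4 : ∏ j ∈ Finset.range (n+1),
        (-(2*(x-1)) + ((((n+1:ℕ):ℝ)+1)*(2*x) - ((j:ℝ)+1)*(x-1)))
      = (∏ j ∈ Finset.range n, ((2*(n:ℝ)+2)*x+2 - ((j:ℝ)+1)*(x-1)))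
          * ((2*(n:ℝ)+2)*x+2 - ((n:ℝ)+1)*(x-1)) := by
    rw [Finset.prod_range_succ]
    congr 1
    · apply Finset.prod_congr rfl
      intro j _
      push_cast; ring
    · push_cast; ring
  have h3 : Aev (2*x) (x-1) (n+2) (-(x-1))
      = (1/(((n+2).factorial):ℝ)) * (-(x-1) *
          ((∏ j ∈ Finset.range n, ((2*(n:ℝ)+2)*x+2 - ((j:ℝ)+1)*(x-1)))
            * ((2*(n:ℝ)+2)*x+2))) := by
    have := Aev_succ (2*x) (x-1) (n+1) (-(x-1))
    rw [hp3] at this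
    exact this
  have h4 : Aev (2*x) (x-1) (n+2) (-(2*(x-1)))
      = (1/(((n+2).factorial):ℝ)) * (-(2*(x-1)) *
          ((∏ j ∈ Finset.range n, ((2*(n:ℝ)+2)*x+2 - ((j:ℝ)+1)*(x-1)))
            * ((2*(n:ℝ)+2)*x+2 - ((n:ℝ)+1)*(x-1)))) := by
    have := Aev_succ (2*x) (x-1) (n+1) (-(2*(x-1)))
    rw [hp4] at this
    exact this
  have h1 : Aev (2*x) (x-1) (n+2) (-(x-1)) = -(x-1) * g x (n+1) := hgA x (n+1)
  -- put it together
  have hcancel : ((x-1)^2) * (((n:ℝ)+1) * g x (n+1))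
      = ((x-1)^2) * ((((n:ℝ)+1)*x+1) * ∑ i ∈ Finset.range (n+1), g x i * g x (n-i)) := by
    linear_combination (((n:ℝ)+1)*(x-1)) * h1 - ((((n:ℝ)+1)*x+1)) * hconv
      + (2*((((n:ℝ)+1)*x+1)) - ((n:ℝ)+1)*(x-1)) * h3 - ((((n:ℝ)+1)*x+1)) * h4
  exact mul_left_cancel₀ (pow_ne_zero 2 hv) hcancel

lemma key (n : ℕ) (x : ℝ) :
    ((n:ℝ)+1) * g x (n+1)
      = (((n:ℝ)+1)*x+1) * ∑ i ∈ Finset.range (n+1), g x i * g x (n-i) := by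
  have hfun : (fun x : ℝ => ((n:ℝ)+1) * g x (n+1))
      = (fun x : ℝ => (((n:ℝ)+1)*x+1) * ∑ i ∈ Finset.range (n+1), g x i * g x (n-i)) := by
    apply Continuous.ext_on (dense_compl_singleton (1:ℝ))
    · exact Continuous.mul continuous_const (g_cont (n+1))
    · apply Continuous.mul (by continuity)
      exact continuous_finset_sum _ (fun i _ => Continuous.mul (g_cont i) (g_cont (n-i)))
    · intro x hx
      exact key_aux n x hx
  exact congrFun hfun x

deriving instance DecidableEq for BinTree

def treeFinset : ℕ → Finset BinTree
  | 0 => {BinTree.nil}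
  | (n+1) => (Finset.range (n+1)).attach.biUnion
      (fun i => ((treeFinset i.1) ×ˢ (treeFinset (n - i.1))).image
        (fun p => BinTree.node p.1 p.2))
  decreasing_by
  · exact Finset.mem_range.mp i.2
  · have := Finset.mem_range.mp i.2; omega

lemma size_eq_zero_iff (T : BinTree) : T.size = 0 ↔ T = BinTree.nil := by
  cases T with
  | nil => simp [BinTree.size]
  | node l r => simp [BinTree.size]

lemma mem_treeFinset : ∀ n (T : BinTree), T ∈ treeFinset n ↔ T.size = n := by
  intro n
  induction n using Nat.strong_induction_on with
  | _ n ih =>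
    intro T
    match n with
    | 0 =>
      simp only [treeFinset, Finset.mem_singleton]
      rw [← size_eq_zero_iff]
    | (m+1) =>
      simp only [treeFinset, Finset.mem_biUnion, Finset.mem_attach, Finset.mem_image,
        Finset.mem_product, true_and]
      constructor
      · rintro ⟨i, ⟨⟨l, r⟩, ⟨hl, hr⟩, rfl⟩⟩
        have hi := Finset.mem_range.mp i.2
        have hls : l.size = i.1 := (ih i.1 (by omega) l).mp hl
        have hrs : r.size = m - i.1 := (ih (m - i.1) (by omega) r).mp hr
        simp only [BinTree.size, hls, hrs]
        omega
      · intro hT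
        match T with
        | .nil => simp [BinTree.size] at hT
        | .node l r =>
          have hsz : l.size + r.size + 1 = m + 1 := hT
          have hls : l.size ≤ m := by omega
          refine ⟨⟨l.size, Finset.mem_range.mpr (by omega)⟩, ⟨(l, r), ⟨?_, ?_⟩, rfl⟩⟩
          · exact (ih l.size (by omega) l).mpr rfl
          · exact (ih (m - l.size) (by omega) r).mpr (by omega)

noncomputable def hookProd (x : ℝ) (T : BinTree) : ℝ :=
  ((T.hooks).map (fun h : ℕ => x + 1/(h:ℝ))).prod

noncomputable def f (x : ℝ) (n : ℕ) : ℝ := ∑ T ∈ treeFinset n, hookProd x T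

lemma f_zero (x : ℝ) : f x 0 = 1 := by
  simp [f, treeFinset, hookProd, BinTree.hooks]

lemma hookProd_node (x : ℝ) (l r : BinTree) :
    hookProd x (BinTree.node l r)
      = (x + 1/(((l.size + r.size + 1 : ℕ)):ℝ)) * (hookProd x l * hookProd x r) := by
  unfold hookProd
  rw [show (BinTree.node l r).hooks
      = (l.size + r.size + 1) ::ₘ (l.hooks + r.hooks) from rfl]
  rw [Multiset.map_cons, Multiset.prod_cons, Multiset.map_add, Multiset.prod_add]

lemma f_succ (x : ℝ) (n : ℕ) :
    f x (n+1) = (x + 1/((n:ℝ)+1)) * ∑ i ∈ Finset.range (n+1), f x i * f x (n-i) := by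
  have hdisj : (↑(Finset.range (n+1)).attach : Set {k // k ∈ Finset.range (n+1)}).PairwiseDisjoint
      (fun i : {k // k ∈ Finset.range (n+1)} =>
        ((treeFinset i.1) ×ˢ (treeFinset (n - i.1))).image (fun p => BinTree.node p.1 p.2)) := by
    intro a _ b _ hab
    simp only [Function.onFun]
    rw [Finset.disjoint_left]
    rintro T hTa hTb
    obtain ⟨⟨la, ra⟩, hpa, rfl⟩ := Finset.mem_image.mp hTa
    obtain ⟨⟨lb, rb⟩, hpb, heq⟩ := Finset.mem_image.mp hTb
    simp only [BinTree.node.injEq] at heq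
    obtain ⟨rfl, rfl⟩ := heq
    rw [Finset.mem_product] at hpa hpb
    have h1 := (mem_treeFinset _ _).mp hpa.1
    have h2 := (mem_treeFinset _ _).mp hpb.1
    exact hab (Subtype.ext (h1 ▸ h2 ▸ rfl))
  have hinner : ∀ i : {k // k ∈ Finset.range (n+1)},
      ∑ T ∈ ((treeFinset i.1) ×ˢ (treeFinset (n - i.1))).image
          (fun p => BinTree.node p.1 p.2), hookProd x T
        = (x + 1/((n:ℝ)+1)) * (f x i.1 * f x (n - i.1)) := by
    intro i
    have hi : i.1 ≤ n := by have := Finset.mem_range.mp i.2; omega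
    rw [Finset.sum_image]
    · rw [Finset.sum_product]
      have hsum : ∀ l ∈ treeFinset i.1, ∀ r ∈ treeFinset (n - i.1),
          hookProd x (BinTree.node l r)
            = (x + 1/((n:ℝ)+1)) * (hookProd x l * hookProd x r) := by
        intro l hl r hr
        have hls := (mem_treeFinset _ l).mp hl
        have hrs := (mem_treeFinset _ r).mp hr
        rw [hookProd_node]
        have hsz : l.size + r.size + 1 = n + 1 := by omega
        rw [hsz]
        push_cast
        ring
      rw [Finset.sum_congr rfl (fun l hl => Finset.sum_congr rfl (fun r hr => hsum l hl r hr))]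
      rw [show f x i.1 * f x (n - i.1)
          = ∑ l ∈ treeFinset i.1, ∑ r ∈ treeFinset (n - i.1), hookProd x l * hookProd x r
          from Finset.sum_mul_sum _ _ _ _]
      simp only [Finset.mul_sum]
    · intro p _ q _ hpq
      simp only [BinTree.node.injEq] at hpq
      exact Prod.ext hpq.1 hpq.2
  rw [show f x (n+1) = ∑ T ∈ treeFinset (n+1), hookProd x T from rfl]
  rw [show treeFinset (n+1) = (Finset.range (n+1)).attach.biUnion
      (fun i => ((treeFinset i.1) ×ˢ (treeFinset (n - i.1))).image
        (fun p => BinTree.node p.1 p.2)) from by rw [treeFinset]]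
  rw [Finset.sum_biUnion hdisj]
  rw [Finset.sum_congr rfl (fun i _ => hinner i)]
  rw [← Finset.sum_attach (Finset.range (n+1)) (fun i => f x i * f x (n-i)), Finset.mul_sum]

lemma f_eq_g (x : ℝ) : ∀ n, f x n = g x n := by
  intro n
  induction n using Nat.strong_induction_on with
  | _ n ih =>
    match n with
    | 0 => rw [f_zero, g_zero]
    | (m+1) =>
      rw [f_succ]
      have hm : ((m:ℝ)+1) ≠ 0 := by positivity
      have hg : g x (m+1)
          = (x + 1/((m:ℝ)+1)) * ∑ i ∈ Finset.range (m+1), g x i * g x (m-i) := by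
        have h1 : g x (m+1) = (((m:ℝ)+1) * g x (m+1))/((m:ℝ)+1) := by
          field_simp
        rw [h1, key m x]
        rw [div_eq_iff hm]
        have hx1 : (x + 1/((m:ℝ)+1)) * ((m:ℝ)+1) = ((m:ℝ)+1)*x + 1 := by
          field_simp
        linear_combination (-(∑ i ∈ Finset.range (m+1), g x i * g x (m-i))) * hx1
      rw [hg]
      congr 1
      apply Finset.sum_congr rfl
      intro i hi
      have hi' := Finset.mem_range.mp hi
      rw [ih i (by omega), ih (m-i) (by omega)]

/-- Lascoux's one-parameter generalization of Postnikov's hook length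
formula, proved by Du and Liu. -/
theorem lascoux_hook_length (n : ℕ) (hn : 1 ≤ n) (x : ℝ) :
    ∑' T : {T : BinTree // T.size = n},
      ((T.1.hooks).map (fun h => x + 1 / h)).prod
      = (1 / (Nat.factorial (n + 1) : ℝ)) *
        ∏ k ∈ Finset.range n, (((n : ℝ) + 1 + k) * x + ((n : ℝ) + 1 - k)) := by
  letI : Fintype {T : BinTree // T.size = n} :=
    Fintype.subtype (treeFinset n) (fun T => mem_treeFinset n T)
  rw [tsum_fintype]
  have hsum : ∑ b : {T : BinTree // T.size = n}, ((b.1.hooks).map (fun h => x + 1 / h)).prod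
      = ∑ b : {T : BinTree // T.size = n}, hookProd x b.1 := by
    apply Finset.sum_congr rfl
    intro b _
    simp [hookProd, Multiset.bind_singleton]
  rw [hsum]
  rw [← Finset.sum_subtype (treeFinset n) (fun T => mem_treeFinset n T)
      (fun T => hookProd x T)]
  exact f_eq_g x n
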